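/- For every positive long root α ∈ Φ_lg ∩ Φ⁺: l(x_α) = (l(s_{α̃}) − l(s_α))/2 = ht∨(α̃) − ht∨(α), and l(x_{−α}) = (l(s_{α̃}) + l(s_α))/2 = ht∨(α̃) + ht∨(α) − 1. -/

import Mathlib

open scoped RealInnerProductSpace Classical

noncomputable section

variable {V : Type} [NormedAddCommGroup V] [InnerProductSpace ℝ V] [FiniteDimensional ℝ V]

/-- The orthogonal reflection of `V` in the hyperplane orthogonal to `α`
(the reflection `s_α` when `α` is a root). -/
def sref (α : V) : V ≃ₗᵢ[ℝ] V := Submodule.reflection (Submodule.span ℝ {α})ᗮ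

/-- The pairing `⟨β, γ∨⟩ = 2(β|γ)/(γ|γ)` of a vector with the coroot of `γ`. -/
def cpair (β γ : V) : ℝ := 2 * ⟪β, γ⟫ / ⟪γ, γ⟫

/-- An irreducible reduced (crystallographic) root system in the real inner product
space `V`, the inner product being invariant under the Weyl group (automatic, since
reflections are isometries), normalized so that the shortest roots have squared length `1`. -/
structure NRootSystem (V : Type) [NormedAddCommGroup V] [InnerProductSpace ℝ V]
    [FiniteDimensional ℝ V] where
  Φ : Finset V
  nonempty : Φ.Nonempty
  zero_not_mem : (0 : V) ∉ Φ
  span_eq_top : Submodule.span ℝ (Φ : Set V) = ⊤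
  reduced : ∀ α ∈ Φ, ∀ t : ℝ, t • α ∈ Φ → t = 1 ∨ t = -1
  pairing_int : ∀ α ∈ Φ, ∀ β ∈ Φ, ∃ n : ℤ, 2 * ⟪β, α⟫ = n * ⟪α, α⟫
  reflect_mem : ∀ α ∈ Φ, ∀ β ∈ Φ, sref α β ∈ Φ
  irreducible : ∀ S : Finset V, S ⊆ Φ → S.Nonempty → (Φ \ S).Nonempty →
    ∃ α ∈ S, ∃ β ∈ Φ \ S, ⟪α, β⟫ ≠ 0
  norm_one_le : ∀ α ∈ Φ, 1 ≤ ⟪α, α⟫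
  exists_norm_one : ∃ α ∈ Φ, ⟪α, α⟫ = 1

namespace NRootSystem

variable (R : NRootSystem V)

/-- `r`, the maximal squared length of a root. -/
def r : ℝ := R.Φ.sup' R.nonempty fun α => ⟪α, α⟫

/-- long roots -/
def IsLong (α : V) : Prop := α ∈ R.Φ ∧ ⟪α, α⟫ = R.r

/-- short roots -/
def IsShort (α : V) : Prop := α ∈ R.Φ ∧ ⟪α, α⟫ < R.r

/-- The Weyl group `W`, generated by the reflections in the roots. -/
def Weyl : Subgroup (V ≃ₗᵢ[ℝ] V) := Subgroup.closure (sref '' (R.Φ : Set V))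

end NRootSystem

/-- The standard parabolic subgroup `W_I` generated by the reflections in `I ⊆ Δ`. -/
def WeylP (I : Finset V) : Subgroup (V ≃ₗᵢ[ℝ] V) := Subgroup.closure (sref '' (I : Set V))

/-- A base (set of simple roots) `Δ` of the root system, together with the
integral coordinates `coeff γ α` of each root `γ` in the basis `Δ`; every root is a
nonnegative or a nonpositive integral combination of the simple roots. -/
structure Base {V : Type} [NormedAddCommGroup V] [InnerProductSpace ℝ V]
    [FiniteDimensional ℝ V] (R : NRootSystem V) where
  Δ : Finset V
  subset : Δ ⊆ R.Φ
  indep : LinearIndependent ℝ (fun a : {x : V // x ∈ Δ} => (a : V))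
  coeff : V → V → ℤ
  coeff_spec : ∀ γ ∈ R.Φ, γ = ∑ α ∈ Δ, (coeff γ α : ℝ) • α
  coeff_sign : ∀ γ ∈ R.Φ, (∀ α ∈ Δ, 0 ≤ coeff γ α) ∨ (∀ α ∈ Δ, coeff γ α ≤ 0)

namespace Base

variable {R : NRootSystem V} (B : Base R)

/-- positive roots -/
def IsPos (γ : V) : Prop := γ ∈ R.Φ ∧ ∀ α ∈ B.Δ, 0 ≤ B.coeff γ α

/-- negative roots -/
def IsNeg (γ : V) : Prop := γ ∈ R.Φ ∧ ∀ α ∈ B.Δ, B.coeff γ α ≤ 0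

/-- the height of a root -/
def ht (γ : V) : ℤ := ∑ α ∈ B.Δ, B.coeff γ α

/-- the dual height `ht∨ γ = ht (γ∨)`: the height of the coroot `γ∨ = 2γ/(γ|γ)`
with respect to the basis of simple coroots `α∨ = 2α/(α|α)`, `α ∈ Δ`. -/
def htv (γ : V) : ℝ := ∑ α ∈ B.Δ, (B.coeff γ α : ℝ) * ⟪α, α⟫ / ⟪γ, γ⟫

/-- The length of `w`: the minimal length of an expression of `w` as a product of
simple reflections. -/
def len (w : V ≃ₗᵢ[ℝ] V) : ℕ :=
  sInf {n | ∃ g : Fin n → V, (∀ i, g i ∈ B.Δ) ∧ w = (List.ofFn fun i => sref (g i)).prod}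

/-- `w` is the longest element of the subgroup `H`. -/
def IsLongest (H : Subgroup (V ≃ₗᵢ[ℝ] V)) (w : V ≃ₗᵢ[ℝ] V) : Prop :=
  w ∈ H ∧ ∀ u ∈ H, B.len u ≤ B.len w

/-- `X_I = {w ∈ W | w(Φ_I⁺) ⊆ Φ⁺}`, the set of minimal length coset
representatives of `W/W_I`. -/
def XI (I : Finset V) : Set (V ≃ₗᵢ[ℝ] V) :=
  {w | w ∈ R.Weyl ∧
    ∀ γ, γ ∈ R.Φ → γ ∈ Submodule.span ℝ (I : Set V) → B.IsPos γ → B.IsPos (w γ)}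

/-- `h` is the highest root. -/
def IsHighest (h : V) : Prop :=
  h ∈ R.Φ ∧ ∀ γ ∈ R.Φ, ∀ α ∈ B.Δ, B.coeff γ α ≤ B.coeff h α

/-- `Ĩ = {α ∈ Δ | (h|α) = 0}`, the simple roots orthogonal to the highest root `h`. -/
def Itil (h : V) : Finset V := B.Δ.filter fun α => ⟪h, α⟫ = 0

/-- The level `L(α)` of a long root `α`, where `h` is the highest root:
`L(α) = ht∨(h) − ht∨(α)` if `α > 0` and `L(α) = ht∨(h) − ht∨(α) − 1` if `α < 0`. -/
def level (h α : V) : ℝ :=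
  if B.IsPos α then B.htv h - B.htv α else B.htv h - B.htv α - 1

/-- The elementary step relation `β →_γ α` on long roots (`γ` a positive root):
`α = s_γ(β)` and `L(α) = L(β) + 1`. -/
def Step (h γ β α : V) : Prop :=
  R.IsLong β ∧ R.IsLong α ∧ B.IsPos γ ∧ α = sref γ β ∧
    B.level h α = B.level h β + 1

/-- `g` is the sequence of positive roots of a path
`β = β₀ →_{g 0} β₁ →_{g 1} ⋯ →_{g (n-1)} β_n = α` from `β` to `α`. -/
def IsPathWord (h : V) {n : ℕ} (g : Fin n → V) (β α : V) : Prop :=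
  ∃ c : Fin (n + 1) → V, c 0 = β ∧ c (Fin.last n) = α ∧
    ∀ i : Fin n, B.Step h (g i) (c i.castSucc) (c i.succ)

/-- a path all of whose steps use simple roots -/
def IsSimplePathWord (h : V) {n : ℕ} (g : Fin n → V) (β α : V) : Prop :=
  B.IsPathWord h g β α ∧ ∀ i, g i ∈ B.Δ

/-- there is a path from `β` to `α`, i.e. `α ⪯ β` -/
def HasPath (h β α : V) : Prop := ∃ (n : ℕ) (g : Fin n → V), B.IsPathWord h g β α

/-- there is a simple path from `β` to `α` -/
def HasSimplePath (h β α : V) : Prop :=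
  ∃ (n : ℕ) (g : Fin n → V), B.IsSimplePathWord h g β α

/-- The covering relation `w →_γ w'` for the Bruhat order:
`w' = s_γ w` and `l(w') = l(w) + 1`, for a positive root `γ`. -/
def BStep (γ : V) (w w' : V ≃ₗᵢ[ℝ] V) : Prop :=
  B.IsPos γ ∧ w' = sref γ * w ∧ B.len w' = B.len w + 1

/-- The Bruhat order on `W`: the reflexive–transitive closure of the covering
relations. -/
def bruhatLE : (V ≃ₗᵢ[ℝ] V) → (V ≃ₗᵢ[ℝ] V) → Prop :=
  Relation.ReflTransGen fun w w' => ∃ γ, B.BStep γ w w'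

/-- `x` is an element of `W` with `x(β) = α` of the minimal possible length
`|L(α) − L(β)|` (this is the element `x_{αβ}` when it exists). -/
def MinTake (h β α : V) (x : V ≃ₗᵢ[ℝ] V) : Prop :=
  x ∈ R.Weyl ∧ x β = α ∧ (B.len x : ℝ) = |B.level h α - B.level h β|

/-- `g` is a reduced expression of `x` as a product of simple reflections. -/
def IsReducedWord {n : ℕ} (g : Fin n → V) (x : V ≃ₗᵢ[ℝ] V) : Prop :=
  (∀ i, g i ∈ B.Δ) ∧ x = (List.ofFn fun i => sref (g i)).prod ∧ n = B.len x

/-- The depth of a positive root `β`: the minimal integer `k` such that there is an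
element `w` of `W` of length `k` with `w(β) < 0`. -/
def depth (β : V) : ℕ := sInf {n | ∃ w ∈ R.Weyl, B.len w = n ∧ B.IsNeg (w β)}

end Base


set_option linter.unusedSectionVars false
set_option maxHeartbeats 1600000

section AuxSref

lemma sref_apply (α x : V) :
    sref α x = x - (2 * ⟪x, α⟫ / ⟪α, α⟫) • α := by
  by_cases hα : α = 0
  · subst hα
    have hx : x ∈ (Submodule.span ℝ ({(0:V)} : Set V))ᗮ := by
      simp [Submodule.span_zero_singleton]
    show Submodule.reflection _ x = _
    rw [Submodule.reflection_mem_subspace_eq_self hx]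
    simp
  · have h1 : sref α x = -(Submodule.reflection (Submodule.span ℝ {α}) x) :=
      Submodule.reflection_orthogonal_apply (K := Submodule.span ℝ {α}) x
    rw [h1, Submodule.reflection_singleton_apply]
    simp only [RCLike.ofReal_real_eq_id, id_eq]
    have hn : ‖α‖ ^ 2 = ⟪α, α⟫ := (real_inner_self_eq_norm_sq α).symm
    rw [hn, real_inner_comm α x]
    rw [neg_sub, two_smul, ← add_smul]
    ring_nf

lemma sref_apply_self (α : V) (hα : α ≠ 0) : sref α α = -α := by
  rw [sref_apply α α]
  have h0 : ⟪α, α⟫ ≠ 0 := inner_self_ne_zero.2 hα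
  rw [mul_div_assoc, div_self h0]
  module

lemma sref_apply_orth (α x : V) (h : ⟪x, α⟫ = 0) : sref α x = x := by
  rw [sref_apply α x, h]
  simp

lemma sref_sref (α x : V) : sref α (sref α x) = x := Submodule.reflection_reflection (K := _) x

lemma sref_mul_self (α : V) : sref α * sref α = 1 := Submodule.reflection_mul_reflection (K := _)

lemma sref_inv (α : V) : (sref α)⁻¹ = sref α := Submodule.reflection_inv

lemma sref_neg (α : V) : sref (-α) = sref α := by
  ext x
  rw [sref_apply, sref_apply]
  simp [inner_neg_neg, inner_neg_right, neg_div, smul_neg, neg_smul, mul_neg]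

lemma lie_mul_apply (u w : V ≃ₗᵢ[ℝ] V) (x : V) : (u * w) x = u (w x) := rfl

lemma sref_conj (u : V ≃ₗᵢ[ℝ] V) (α : V) : u * sref α * u⁻¹ = sref (u α) := by
  ext x
  rw [lie_mul_apply, lie_mul_apply, sref_apply, sref_apply]
  have h1 : ⟪(u⁻¹ : V ≃ₗᵢ[ℝ] V) x, α⟫ = ⟪x, u α⟫ := by
    have := u.inner_map_map ((u⁻¹ : V ≃ₗᵢ[ℝ] V) x) α
    rw [← this]
    congr 1
    exact u.apply_symm_apply x
  have h2 : ⟪α, α⟫ = ⟪u α, u α⟫ := (u.inner_map_map α α).symm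
  rw [h1, h2, map_sub, map_smul]
  congr 1
  exact u.apply_symm_apply x

lemma sref_conj' (u : V ≃ₗᵢ[ℝ] V) (α : V) : sref (u α) = u * sref α * u⁻¹ :=
  (sref_conj u α).symm

end AuxSref

namespace P9
variable {R : NRootSystem V} (B : Base R)

lemma root_ne_zero {γ : V} (hγ : γ ∈ R.Φ) : γ ≠ 0 := fun h => R.zero_not_mem (h ▸ hγ)

lemma inner_self_pos' {γ : V} (hγ : γ ∈ R.Φ) : 0 < ⟪γ,γ⟫ := by
  linarith [R.norm_one_le γ hγ]

lemma neg_mem {γ : V} (hγ : γ ∈ R.Φ) : -γ ∈ R.Φ := by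
  have := R.reflect_mem γ hγ γ hγ
  rwa [sref_apply_self γ (root_ne_zero hγ)] at this

lemma coeff_ext {γ : V} (hγ : γ ∈ R.Φ) (c : V → ℝ) (hc : γ = ∑ α ∈ B.Δ, c α • α) :
    ∀ α ∈ B.Δ, (B.coeff γ α : ℝ) = c α := by
  have hzero : ∑ a ∈ B.Δ.attach, (((B.coeff γ a : ℝ)) - c a) • (a : V) = 0 := by
    rw [Finset.sum_attach B.Δ (fun α => (((B.coeff γ α : ℝ)) - c α) • α)]
    simp only [sub_smul, Finset.sum_sub_distrib]
    rw [← B.coeff_spec γ hγ, ← hc]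
    simp
  have h := linearIndependent_iff'.1 B.indep B.Δ.attach
    (fun a => ((B.coeff γ a : ℝ)) - c a) hzero
  intro α hα
  have := h ⟨α, hα⟩ (Finset.mem_attach _ _)
  simpa [sub_eq_zero] using this

lemma coeff_simple {β : V} (hβ : β ∈ B.Δ) :
    ∀ α ∈ B.Δ, (B.coeff β α : ℝ) = if α = β then 1 else 0 := by
  apply coeff_ext B (B.subset hβ)
  rw [Finset.sum_congr rfl (fun α (_ : α ∈ B.Δ) => by
    rw [ite_smul, one_smul, zero_smul])]
  rw [Finset.sum_ite_eq' B.Δ β (fun α => α)]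
  simp [hβ]

lemma coeff_neg {γ : V} (hγ : γ ∈ R.Φ) :
    ∀ α ∈ B.Δ, (B.coeff (-γ) α : ℝ) = -(B.coeff γ α : ℝ) := by
  apply coeff_ext B (neg_mem hγ)
  have h1 : -γ = -(∑ α ∈ B.Δ, (B.coeff γ α : ℝ) • α) := by
    rw [← B.coeff_spec γ hγ]
  rw [h1, ← Finset.sum_neg_distrib]
  exact Finset.sum_congr rfl (fun α _ => by rw [neg_smul])

lemma pairing {γ β : V} (hγ : γ ∈ R.Φ) (hβ : β ∈ R.Φ) :
    ∃ n : ℤ, 2 * ⟪γ, β⟫ = n * ⟪β, β⟫ := R.pairing_int β hβ γ hγ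

lemma sref_apply_int {β γ : V} (hβ : β ∈ R.Φ) (hγ : γ ∈ R.Φ) (n : ℤ)
    (hn : 2 * ⟪γ, β⟫ = n * ⟪β, β⟫) : sref β γ = γ - (n : ℝ) • β := by
  rw [sref_apply β γ, hn, mul_div_assoc,
    div_self (ne_of_gt (inner_self_pos' hβ)), mul_one]

lemma coeff_sref {β γ : V} (hβ : β ∈ B.Δ) (hγ : γ ∈ R.Φ) (n : ℤ)
    (hn : 2 * ⟪γ, β⟫ = n * ⟪β, β⟫) :
    ∀ α ∈ B.Δ, (B.coeff (sref β γ) α : ℝ)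
      = (B.coeff γ α : ℝ) - if α = β then (n : ℝ) else 0 := by
  apply coeff_ext B (R.reflect_mem β (B.subset hβ) γ hγ)
  rw [sref_apply_int (B.subset hβ) hγ n hn]
  rw [Finset.sum_congr rfl (fun α _ => by rw [sub_smul, ite_smul, zero_smul])]
  rw [Finset.sum_sub_distrib, ← B.coeff_spec γ hγ,
    Finset.sum_ite_eq' B.Δ β (fun α => (n:ℝ) • α)]
  simp [hβ]

lemma isPos_or_isNeg {γ : V} (hγ : γ ∈ R.Φ) : B.IsPos γ ∨ B.IsNeg γ := by
  rcases B.coeff_sign γ hγ with h | h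
  · exact Or.inl ⟨hγ, h⟩
  · exact Or.inr ⟨hγ, h⟩

lemma not_pos_and_neg {γ : V} (h1 : B.IsPos γ) (h2 : B.IsNeg γ) : False := by
  have : γ = 0 := by
    rw [B.coeff_spec γ h1.1]
    apply Finset.sum_eq_zero
    intro α hα
    have := le_antisymm (h2.2 α hα) (h1.2 α hα)
    rw [this]; simp
  exact R.zero_not_mem (this ▸ h1.1)

lemma isNeg_neg {γ : V} (h : B.IsPos γ) : B.IsNeg (-γ) := by
  refine ⟨neg_mem h.1, fun α hα => ?_⟩
  have : (B.coeff (-γ) α : ℝ) = -(B.coeff γ α : ℝ) := coeff_neg B h.1 α hα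
  have h2 : (0:ℝ) ≤ (B.coeff γ α : ℝ) := by exact_mod_cast h.2 α hα
  exact_mod_cast this ▸ neg_nonpos.2 h2

lemma isPos_neg {γ : V} (h : B.IsNeg γ) : B.IsPos (-γ) := by
  refine ⟨neg_mem h.1, fun α hα => ?_⟩
  have : (B.coeff (-γ) α : ℝ) = -(B.coeff γ α : ℝ) := coeff_neg B h.1 α hα
  have h2 : (B.coeff γ α : ℝ) ≤ 0 := by exact_mod_cast h.2 α hα
  exact_mod_cast this ▸ neg_nonneg.2 h2

lemma isPos_simple {β : V} (hβ : β ∈ B.Δ) : B.IsPos β := by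
  refine ⟨B.subset hβ, fun α hα => ?_⟩
  have h0 := coeff_simple B hβ α hα
  by_cases h : α = β
  · rw [if_pos h] at h0
    have : B.coeff β α = 1 := by exact_mod_cast h0
    omega
  · rw [if_neg h] at h0
    have : B.coeff β α = 0 := by exact_mod_cast h0
    omega

lemma not_isPos_of_isNeg {γ : V} (h : B.IsNeg γ) : ¬ B.IsPos γ :=
  fun h' => not_pos_and_neg B h' h

lemma isNeg_of_not_isPos {γ : V} (hγ : γ ∈ R.Φ) (h : ¬ B.IsPos γ) : B.IsNeg γ :=
  (isPos_or_isNeg B hγ).resolve_left h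

lemma root_smul_eq {γ β : V} (hγ : γ ∈ R.Φ) (hβ : β ∈ R.Φ) (t : ℝ) (h : β = t • γ) :
    β = γ ∨ β = -γ := by
  rcases R.reduced γ hγ t (h ▸ hβ) with h1 | h1 <;> rw [h, h1] <;> simp

lemma sq_inner_lt {γ β : V} (hγ : γ ∈ R.Φ) (hβ : β ∈ R.Φ)
    (hne : β ≠ γ) (hne' : β ≠ -γ) : ⟪β,γ⟫^2 < ⟪β,β⟫ * ⟪γ,γ⟫ := by
  have hγ0 : γ ≠ 0 := root_ne_zero hγ
  have hβ0 : β ≠ 0 := root_ne_zero hβ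
  have hγn : (0:ℝ) < ‖γ‖ := norm_pos_iff.2 hγ0
  have hγnn : ‖γ‖ ≠ 0 := ne_of_gt hγn
  have h1 : ⟪β,γ⟫ < ‖β‖ * ‖γ‖ := by
    rw [inner_lt_norm_mul_iff_real]
    intro hc
    have hb : β = (‖γ‖⁻¹ * ‖β‖) • γ := by
      have := congrArg (fun v => (‖γ‖)⁻¹ • v) hc
      simp only [smul_smul, inv_mul_cancel₀ hγnn, one_smul] at this
      exact this
    rcases root_smul_eq hγ hβ _ hb with h | h
    exacts [hne h, hne' h]
  have h2 : -⟪β,γ⟫ < ‖β‖ * ‖γ‖ := by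
    have hiff := @inner_lt_norm_mul_iff_real V _ _ (-β) γ
    rw [inner_neg_left, norm_neg] at hiff
    rw [hiff]
    intro hc
    have hb : β = (-(‖γ‖⁻¹ * ‖β‖)) • γ := by
      have h9 := congrArg (fun v => (‖γ‖)⁻¹ • v) hc
      simp only [smul_smul, inv_mul_cancel₀ hγnn, one_smul, smul_neg] at h9
      rw [neg_smul, ← h9, neg_neg]
    rcases root_smul_eq hγ hβ _ hb with h | h
    exacts [hne h, hne' h]
  have habs : |⟪β,γ⟫| < ‖β‖ * ‖γ‖ := abs_lt.2 ⟨by linarith, h1⟩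
  have := sq_lt_sq' (by linarith) h1
  calc ⟪β,γ⟫^2 < (‖β‖ * ‖γ‖)^2 := this
    _ = ⟪β,β⟫ * ⟪γ,γ⟫ := by
        rw [mul_pow, real_inner_self_eq_norm_sq, real_inner_self_eq_norm_sq]

lemma pair_abs_le_one {γ β : V} (hγ : γ ∈ R.Φ) (hβ : β ∈ R.Φ)
    (hlong : ⟪β,β⟫ ≤ ⟪γ,γ⟫) (hne : β ≠ γ) (hne' : β ≠ -γ) (n : ℤ)
    (hn : 2 * ⟪β, γ⟫ = n * ⟪γ, γ⟫) : n = -1 ∨ n = 0 ∨ n = 1 := by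
  obtain ⟨m, hm⟩ := pairing (γ := γ) (β := β) hγ hβ
  rw [real_inner_comm β γ] at hm
  have hγp := inner_self_pos' hγ
  have hβp := inner_self_pos' hβ
  have hsq := sq_inner_lt hγ hβ hne hne'
  -- n⟪γ,γ⟫ = m⟪β,β⟫
  have heq : (n:ℝ) * ⟪γ,γ⟫ = (m:ℝ) * ⟪β,β⟫ := by
    rw [← hn, ← hm, real_inner_comm]
  -- n*m*(⟪γ,γ⟫*⟪β,β⟫) = 4⟪β,γ⟫²
  have hprod : ((n*m : ℤ):ℝ) * (⟪γ,γ⟫ * ⟪β,β⟫) = 4 * ⟪β,γ⟫^2 := by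
    push_cast
    have h8 : ((n:ℝ) * ⟪γ,γ⟫) * ((m:ℝ) * ⟪β,β⟫) = (2*⟪β,γ⟫) * (2*⟪β,γ⟫) := by
      rw [← hn, ← hm]
    linear_combination h8
  have hnm0 : (0:ℤ) ≤ n * m := by
    by_contra hc
    push_neg at hc
    have : ((n*m:ℤ):ℝ) < 0 := by exact_mod_cast hc
    nlinarith [sq_nonneg ⟪β,γ⟫, mul_pos hγp hβp]
  have hnm3 : n * m ≤ 3 := by
    by_contra hc
    push_neg at hc
    have h4 : (4:ℝ) ≤ ((n*m:ℤ):ℝ) := by exact_mod_cast hc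
    nlinarith [mul_pos hγp hβp]
  -- |n| <= |m|
  have hab : |n| ≤ |m| := by
    by_contra hc
    push_neg at hc
    have h6 : |(n:ℝ)| * ⟪γ,γ⟫ = |(m:ℝ)| * ⟪β,β⟫ := by
      have := abs_eq_abs.2 (Or.inl heq)
      rwa [abs_mul, abs_mul, abs_of_pos hγp, abs_of_pos hβp] at this
    rw [← Int.cast_abs, ← Int.cast_abs] at h6
    have h5 : ((|m| : ℤ):ℝ) + 1 ≤ ((|n| : ℤ):ℝ) := by
      exact_mod_cast (by omega : |m| + 1 ≤ |n|)
    have hm0 : (0:ℝ) ≤ ((|m| : ℤ):ℝ) := by exact_mod_cast abs_nonneg m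
    have h7 : ((|m| : ℤ):ℝ) * ⟪β,β⟫ ≤ ((|m| : ℤ):ℝ) * ⟪γ,γ⟫ :=
      mul_le_mul_of_nonneg_left hlong hm0
    nlinarith [h6, h5, h7, hγp]
  have e1 : |n| * |m| = n * m := by rw [← abs_mul, abs_of_nonneg hnm0]
  have e2 : |n| * |n| ≤ |n| * |m| := mul_le_mul_of_nonneg_left hab (abs_nonneg n)
  have hsq3 : |n| * |n| ≤ 3 := by omega
  have h9 : |n| ≤ 1 := by nlinarith [abs_nonneg n]
  have := abs_le.1 h9
  omega

-- ===== chunk 3: int coeff versions, ht, htv =====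

lemma r_max {δ : V} (hδ : δ ∈ R.Φ) : ⟪δ,δ⟫ ≤ R.r := by
  unfold NRootSystem.r
  exact Finset.le_sup' (f := fun α => (⟪α,α⟫ : ℝ)) hδ

lemma coeff_simple_int {β : V} (hβ : β ∈ B.Δ) :
    ∀ α ∈ B.Δ, B.coeff β α = if α = β then 1 else 0 := by
  intro α hα
  have := coeff_simple B hβ α hα
  split at this <;> split <;> first | (exact_mod_cast this) | simp_all

lemma coeff_neg_int {γ : V} (hγ : γ ∈ R.Φ) :
    ∀ α ∈ B.Δ, B.coeff (-γ) α = -(B.coeff γ α) := by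
  intro α hα
  have := coeff_neg B hγ α hα
  exact_mod_cast this

lemma coeff_sref_int {β γ : V} (hβ : β ∈ B.Δ) (hγ : γ ∈ R.Φ) (n : ℤ)
    (hn : 2 * ⟪γ, β⟫ = n * ⟪β, β⟫) :
    ∀ α ∈ B.Δ, B.coeff (sref β γ) α = B.coeff γ α - if α = β then n else 0 := by
  intro α hα
  have := coeff_sref B hβ hγ n hn α hα
  split at this <;> split <;> first | (exact_mod_cast this) | simp_all

lemma ht_sref {β γ : V} (hβ : β ∈ B.Δ) (hγ : γ ∈ R.Φ) (n : ℤ)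
    (hn : 2 * ⟪γ, β⟫ = n * ⟪β, β⟫) :
    B.ht (sref β γ) = B.ht γ - n := by
  unfold Base.ht
  rw [Finset.sum_congr rfl (coeff_sref_int B hβ hγ n hn), Finset.sum_sub_distrib,
    Finset.sum_ite_eq' B.Δ β (fun _ => n)]
  simp [hβ]

lemma ht_pos_ge_one {γ : V} (hγ : B.IsPos γ) : 1 ≤ B.ht γ := by
  by_contra hc
  push_neg at hc
  unfold Base.ht at hc
  have hsum : ∑ α ∈ B.Δ, B.coeff γ α = 0 := le_antisymm (by omega)
    (Finset.sum_nonneg (fun α hα => hγ.2 α hα))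
  have hall := (Finset.sum_eq_zero_iff_of_nonneg (fun α hα => hγ.2 α hα)).1 hsum
  have : γ = 0 := by
    rw [B.coeff_spec γ hγ.1]
    apply Finset.sum_eq_zero
    intro α hα
    rw [hall α hα]; simp
  exact R.zero_not_mem (this ▸ hγ.1)

lemma ht_le_highest {h : V} (hh : B.IsHighest h) {γ : V} (hγ : γ ∈ R.Φ) :
    B.ht γ ≤ B.ht h :=
  Finset.sum_le_sum (fun α hα => hh.2 γ hγ α hα)

lemma htv_simple {β : V} (hβ : β ∈ B.Δ) : B.htv β = 1 := by
  unfold Base.htv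
  have hb := inner_self_pos' (R := R) (B.subset hβ)
  have hterm : ∀ α ∈ B.Δ, (B.coeff β α : ℝ) * ⟪α,α⟫ / ⟪β,β⟫
      = if α = β then ⟪β,β⟫ / ⟪β,β⟫ else 0 := by
    intro α hα
    rw [coeff_simple B hβ α hα]
    by_cases h : α = β
    · rw [if_pos h, if_pos h, h, one_mul]
    · rw [if_neg h, if_neg h, zero_mul, zero_div]
  rw [Finset.sum_congr rfl hterm, Finset.sum_ite_eq' B.Δ β (fun _ => ⟪β,β⟫ / ⟪β,β⟫)]
  simp [hβ, div_self (ne_of_gt hb), root_ne_zero (R := R) (B.subset hβ)]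

lemma htv_neg {γ : V} (hγ : γ ∈ R.Φ) : B.htv (-γ) = -B.htv γ := by
  unfold Base.htv
  rw [← Finset.sum_neg_distrib]
  apply Finset.sum_congr rfl
  intro α hα
  rw [coeff_neg B hγ α hα, inner_neg_neg]
  ring

lemma htv_sref {β γ : V} (hβ : β ∈ B.Δ) (hγ : γ ∈ R.Φ) (n : ℤ)
    (hn : 2 * ⟪γ, β⟫ = n * ⟪β, β⟫) :
    B.htv (sref β γ) = B.htv γ - 2 * ⟪γ, β⟫ / ⟪γ, γ⟫ := by
  unfold Base.htv
  have hnorm : ⟪sref β γ, sref β γ⟫ = ⟪γ, γ⟫ := (sref β).inner_map_map γ γ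
  have hterm : ∀ α ∈ B.Δ, (B.coeff (sref β γ) α : ℝ) * ⟪α,α⟫ / ⟪sref β γ, sref β γ⟫
      = (B.coeff γ α : ℝ) * ⟪α,α⟫ / ⟪γ,γ⟫ - (if α = β then (n:ℝ) * ⟪α,α⟫ / ⟪γ,γ⟫ else 0) := by
    intro α hα
    rw [coeff_sref B hβ hγ n hn α hα, hnorm]
    by_cases h : α = β
    · rw [if_pos h, if_pos h]; ring
    · rw [if_neg h, if_neg h]; ring
  rw [Finset.sum_congr rfl hterm, Finset.sum_sub_distrib,
    Finset.sum_ite_eq' B.Δ β (fun α => (n:ℝ) * ⟪α,α⟫ / ⟪γ,γ⟫)]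
  simp only [hβ, if_pos]
  rw [show (n:ℝ) * ⟪β,β⟫ / ⟪γ,γ⟫ = 2 * ⟪γ,β⟫ / ⟪γ,γ⟫ from by rw [← hn]]

-- ===== chunk 4: simple reflections permute positive roots =====

lemma isPos_sref_simple {β γ : V} (hβ : β ∈ B.Δ) (hγpos : B.IsPos γ) (hne : γ ≠ β) :
    B.IsPos (sref β γ) := by
  have hγ := hγpos.1
  have hβΦ := B.subset hβ
  obtain ⟨n, hn⟩ := pairing (R := R) hγ hβΦ
  have hmem : sref β γ ∈ R.Φ := R.reflect_mem β hβΦ γ hγ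
  rcases isPos_or_isNeg B hmem with hp | hneg
  · exact hp
  · exfalso
    have hex : ∃ α₀ ∈ B.Δ, α₀ ≠ β ∧ 1 ≤ B.coeff γ α₀ := by
      by_contra hc
      push_neg at hc
      have hterm : ∀ α ∈ B.Δ, (B.coeff γ α : ℝ) • α
          = if α = β then (B.coeff γ β : ℝ) • β else 0 := by
        intro α hα
        by_cases h : α = β
        · rw [if_pos h, h]
        · rw [if_neg h]
          have h1 := hc α hα h
          have h2 := hγpos.2 α hα
          have : B.coeff γ α = 0 := by omega
          rw [this]; simp
      have hγeq : γ = (B.coeff γ β : ℝ) • β := by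
        conv_lhs => rw [B.coeff_spec γ hγ]
        rw [Finset.sum_congr rfl hterm,
          Finset.sum_ite_eq' B.Δ β (fun _ => (B.coeff γ β : ℝ) • β)]
        simp [hβ]
      rcases root_smul_eq (R := R) hβΦ hγ _ hγeq with h | h
      · exact hne h
      · exact not_pos_and_neg B (h ▸ hγpos) (h ▸ isNeg_neg B (isPos_simple B hβ))
    obtain ⟨α₀, hα₀, hα₀ne, hα₀pos⟩ := hex
    have h3 := coeff_sref_int B hβ hγ n hn α₀ hα₀
    rw [if_neg hα₀ne] at h3
    have := hneg.2 α₀ hα₀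
    omega

lemma isNeg_sref_simple {β γ : V} (hβ : β ∈ B.Δ) (hγneg : B.IsNeg γ) (hne : γ ≠ -β) :
    B.IsNeg (sref β γ) := by
  have h1 : B.IsPos (sref β (-γ)) := by
    apply isPos_sref_simple B hβ (isPos_neg B hγneg)
    intro hc
    exact hne (by rw [← neg_neg γ, hc])
  rw [map_neg] at h1
  have := isNeg_neg B h1
  rwa [neg_neg] at this

lemma eq_of_sref_not_pos {β γ : V} (hβ : β ∈ B.Δ) (hpos : B.IsPos γ)
    (hneg : ¬ B.IsPos (sref β γ)) : γ = β := by
  by_contra hc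
  exact hneg (isPos_sref_simple B hβ hpos hc)

-- ===== chunk 5: words =====

def wprod (l : List V) : V ≃ₗᵢ[ℝ] V := (l.map sref).prod

lemma wprod_nil : wprod ([] : List V) = 1 := rfl

lemma wprod_cons (β : V) (t : List V) : wprod (β :: t) = sref β * wprod t := by
  simp [wprod]

lemma wprod_append (l₁ l₂ : List V) : wprod (l₁ ++ l₂) = wprod l₁ * wprod l₂ := by
  simp [wprod]

lemma wprod_singleton (β : V) : wprod [β] = sref β := by
  simp [wprod]

lemma wprod_reverse (l : List V) : wprod l.reverse = (wprod l)⁻¹ := by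
  induction l with
  | nil => simp [wprod_nil]
  | cons β t ih =>
      rw [List.reverse_cons, wprod_append, ih, wprod_singleton, wprod_cons,
        mul_inv_rev, sref_inv]

lemma wprod_root_mem {l : List V} (hl : ∀ γ' ∈ l, γ' ∈ R.Φ) {γ : V} (hγ : γ ∈ R.Φ) :
    wprod l γ ∈ R.Φ := by
  induction l with
  | nil => simpa [wprod_nil]
  | cons β t ih =>
      rw [wprod_cons, lie_mul_apply]
      exact R.reflect_mem β (hl β (by simp)) _ (ih (fun γ' hγ' => hl γ' (by simp [hγ'])))

lemma wprod_mem_weyl {l : List V} (hl : ∀ γ' ∈ l, γ' ∈ R.Φ) : wprod l ∈ R.Weyl := by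
  induction l with
  | nil => exact one_mem _
  | cons β t ih =>
      rw [wprod_cons]
      refine mul_mem ?_ (ih (fun γ' hγ' => hl γ' (by simp [hγ'])))
      exact Subgroup.subset_closure ⟨β, by simpa using hl β (by simp), rfl⟩

lemma wprod_span {I : Finset V} {l : List V} (hl : ∀ γ' ∈ l, γ' ∈ I) {v : V}
    (hv : v ∈ Submodule.span ℝ (I : Set V)) :
    wprod l v ∈ Submodule.span ℝ (I : Set V) := by
  induction l with
  | nil => simpa [wprod_nil]
  | cons β t ih =>
      rw [wprod_cons, lie_mul_apply, sref_apply]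
      refine Submodule.sub_mem _ (ih (fun γ' hγ' => hl γ' (by simp [hγ']))) ?_
      exact Submodule.smul_mem _ _ (Submodule.subset_span (by
        simpa using hl β (by simp)))

-- ===== chunk 6: level lemmas =====

lemma level_eq_pos {h γ : V} (hpos : B.IsPos γ) :
    B.level h γ = B.htv h - B.htv γ := by
  unfold Base.level
  rw [if_pos hpos]

lemma level_eq_neg {h γ : V} (hneg : B.IsNeg γ) :
    B.level h γ = B.htv h - B.htv γ - 1 := by
  unfold Base.level
  rw [if_neg (not_isPos_of_isNeg B hneg)]

lemma level_sref_le_one (h : V) {β γ : V} (hβ : β ∈ B.Δ) (hγ : γ ∈ R.Φ)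
    (hlg : ⟪γ,γ⟫ = R.r) : |B.level h (sref β γ) - B.level h γ| ≤ 1 := by
  have hβΦ := B.subset hβ
  have hβ0 : β ≠ 0 := root_ne_zero (R := R) hβΦ
  have hβpos := isPos_simple B hβ
  have hβneg : B.IsNeg (-β) := isNeg_neg B hβpos
  by_cases hc1 : γ = β
  · subst hc1
    rw [sref_apply_self γ hβ0, level_eq_pos B hβpos, level_eq_neg B hβneg,
      htv_neg B hβΦ, htv_simple B hβ]
    norm_num
  by_cases hc2 : γ = -β
  · subst hc2
    rw [map_neg, sref_apply_self β hβ0, neg_neg, level_eq_pos B hβpos,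
      level_eq_neg B hβneg, htv_neg B hβΦ, htv_simple B hβ]
    norm_num
  · obtain ⟨n2, hn2⟩ := pairing (R := R) hβΦ hγ
    obtain ⟨n1, hn1⟩ := pairing (R := R) hγ hβΦ
    have hγγ : (0:ℝ) < ⟪γ,γ⟫ := inner_self_pos' (R := R) hγ
    have hβle : ⟪β,β⟫ ≤ ⟪γ,γ⟫ := hlg ▸ r_max (R := R) hβΦ
    have hne1 : β ≠ γ := fun hc => hc1 hc.symm
    have hne2 : β ≠ -γ := fun hc => hc2 (by rw [hc, neg_neg])
    have hn2tri := pair_abs_le_one hγ hβΦ hβle hne1 hne2 n2 hn2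
    have habs : |(n2:ℝ)| ≤ 1 := by
      rcases hn2tri with h | h | h <;> rw [h] <;> norm_num
    have hhtv : B.htv (sref β γ) = B.htv γ - n2 := by
      rw [htv_sref B hβ hγ n1 hn1, real_inner_comm β γ, hn2, mul_div_assoc,
        div_self (ne_of_gt hγγ), mul_one]
    rcases isPos_or_isNeg B hγ with hp | hn
    · have hsp := isPos_sref_simple B hβ hp hc1
      rw [level_eq_pos B hsp, level_eq_pos B hp, hhtv]
      rw [show B.htv h - (B.htv γ - ↑n2) - (B.htv h - B.htv γ) = (n2:ℝ) from by ring]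
      exact habs
    · have hsn := isNeg_sref_simple B hβ hn hc2
      rw [level_eq_neg B hsn, level_eq_neg B hn, hhtv]
      rw [show B.htv h - (B.htv γ - ↑n2) - 1 - (B.htv h - B.htv γ - 1) = (n2:ℝ) from by ring]
      exact habs

-- ===== chunk 7: path lower bound =====

lemma level_wprod_bound (h : V) {l : List V} (hl : ∀ γ' ∈ l, γ' ∈ B.Δ) {γ : V}
    (hγ : γ ∈ R.Φ) (hlg : ⟪γ,γ⟫ = R.r) :
    |B.level h (wprod l γ) - B.level h γ| ≤ (l.length : ℝ) := by
  induction l with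
  | nil => simp [wprod_nil]
  | cons β t ih =>
      have htl : ∀ γ' ∈ t, γ' ∈ B.Δ := fun γ' hγ' => hl γ' (by simp [hγ'])
      have hv : wprod t γ ∈ R.Φ := wprod_root_mem (R := R)
        (fun γ' hγ' => B.subset (htl γ' hγ')) hγ
      have hvlg : ⟪wprod t γ, wprod t γ⟫ = R.r := by
        rw [(wprod t).inner_map_map γ γ]; exact hlg
      have hstep := level_sref_le_one B h (hl β (by simp)) hv hvlg
      have htri := abs_sub_le (B.level h (wprod (β :: t) γ)) (B.level h (wprod t γ))
        (B.level h γ)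
      rw [wprod_cons, lie_mul_apply] at htri ⊢
      have := ih htl
      simp only [List.length_cons]
      push_cast
      linarith

-- ===== chunk 8: deletion =====

lemma deletion {S : Finset V} (hS : S ⊆ B.Δ) :
    ∀ (l : List V), (∀ γ ∈ l, γ ∈ S) → ∀ {δ : V}, B.IsPos δ → ¬ B.IsPos (wprod l δ) →
    ∃ l', (∀ γ ∈ l', γ ∈ S) ∧ l'.length + 1 = l.length ∧ wprod l' = wprod l * sref δ := by
  intro l
  induction l with
  | nil =>
      intro _ δ hδ hneg
      exfalso
      rw [wprod_nil] at hneg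
      exact hneg (by simpa using hδ)
  | cons β t ih =>
      intro hl δ hδ hneg
      have htl : ∀ γ ∈ t, γ ∈ S := fun γ hγ => hl γ (by simp [hγ])
      have hβS : β ∈ S := hl β (by simp)
      rw [wprod_cons, lie_mul_apply] at hneg
      by_cases hv : B.IsPos (wprod t δ)
      · have hveq : wprod t δ = β := eq_of_sref_not_pos B (hS hβS) hv hneg
        refine ⟨t, htl, by simp, ?_⟩
        have h1 : sref β * wprod t = wprod t * sref δ := by
          rw [← hveq, ← sref_conj (wprod t) δ]
          group
        rw [wprod_cons, mul_assoc, ← h1, ← mul_assoc, sref_mul_self, one_mul]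
      · obtain ⟨l₂, hl₂S, hl₂len, hl₂⟩ := ih htl hδ hv
        refine ⟨β :: l₂, ?_, by simp [← hl₂len], ?_⟩
        · intro γ hγ
          rcases List.mem_cons.1 hγ with h | h
          · exact h ▸ hβS
          · exact hl₂S γ h
        · rw [wprod_cons, hl₂, wprod_cons, mul_assoc]

-- ===== chunk 9: if all images of S positive, w = 1 =====

lemma eq_one_of_all_pos {S : Finset V} (hS : S ⊆ B.Δ) :
    ∀ (N : ℕ) (l : List V), l.length ≤ N → (∀ γ ∈ l, γ ∈ S) →
    (∀ β ∈ S, B.IsPos (wprod l β)) → wprod l = 1 := by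
  intro N
  induction N with
  | zero =>
      intro l hlen _ _
      rw [List.length_eq_zero_iff.1 (Nat.le_zero.1 hlen), wprod_nil]
  | succ N ih =>
      intro l hlen hl hpos
      rcases l.eq_nil_or_concat with rfl | ⟨t, δ, rfl⟩
      · exact wprod_nil
      · rw [List.concat_eq_append] at *
        have hδS : δ ∈ S := hl δ (by simp)
        have hδpos : B.IsPos δ := isPos_simple B (hS hδS)
        have htl : ∀ γ ∈ t, γ ∈ S := fun γ hγ => hl γ (by simp [hγ])
        have hw : wprod (t ++ [δ]) = wprod t * sref δ := by
          rw [wprod_append, wprod_singleton]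
        have hwδ : B.IsPos (wprod (t ++ [δ]) δ) := hpos δ hδS
        have hneg : ¬ B.IsPos (wprod t δ) := by
          have h1 : wprod (t ++ [δ]) δ = -(wprod t δ) := by
            rw [hw, lie_mul_apply, sref_apply_self δ (root_ne_zero (R := R) hδpos.1),
              map_neg]
          have h2 : B.IsNeg (-(wprod (t ++ [δ]) δ)) := isNeg_neg B hwδ
          rw [h1, neg_neg] at h2
          exact not_isPos_of_isNeg B h2
        obtain ⟨l₂, hl₂S, hl₂len, hl₂⟩ := deletion B hS t htl hδpos hneg
        have hl₂w : wprod l₂ = wprod (t ++ [δ]) := by rw [hl₂, hw]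
        have hlen₂ : l₂.length ≤ N := by
          simp only [List.length_append, List.length_singleton] at hlen
          omega
        have := ih l₂ hlen₂ hl₂S (fun β hβ => by rw [hl₂w]; exact hpos β hβ)
        rw [← hl₂w, this]

-- ===== chunk 10: every Weyl element is a product of simple reflections =====

lemma exists_simple_inner_pos {γ : V} (hγpos : B.IsPos γ) : ∃ β ∈ B.Δ, 0 < ⟪γ, β⟫ := by
  by_contra hc
  push_neg at hc
  have h0 : (0:ℝ) < ⟪γ, γ⟫ := inner_self_pos' (R := R) hγpos.1
  have h1 : ⟪γ, γ⟫ = ∑ α ∈ B.Δ, (B.coeff γ α : ℝ) * ⟪γ, α⟫ := by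
    conv_lhs => rw [show ⟪γ,γ⟫ = ⟪γ, ∑ α ∈ B.Δ, (B.coeff γ α : ℝ) • α⟫ from by
      rw [← B.coeff_spec γ hγpos.1]]
    rw [inner_sum]
    exact Finset.sum_congr rfl (fun α _ => real_inner_smul_right γ α _)
  have h2 : ∑ α ∈ B.Δ, (B.coeff γ α : ℝ) * ⟪γ, α⟫ ≤ 0 := by
    apply Finset.sum_nonpos
    intro α hα
    have hc1 : (0:ℝ) ≤ (B.coeff γ α : ℝ) := by exact_mod_cast hγpos.2 α hα
    exact mul_nonpos_of_nonneg_of_nonpos hc1 (hc α hα)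
  linarith [h1 ▸ h0]

lemma sref_simple_word_aux :
    ∀ (N : ℕ) (γ : V), (B.ht γ).toNat ≤ N → B.IsPos γ →
    ∃ l, (∀ β ∈ l, β ∈ B.Δ) ∧ wprod l = sref γ := by
  intro N
  induction N with
  | zero =>
      intro γ hN hγpos
      exfalso
      have := ht_pos_ge_one B hγpos
      omega
  | succ N ih =>
      intro γ hN hγpos
      by_cases hγΔ : γ ∈ B.Δ
      · exact ⟨[γ], by simp [hγΔ], wprod_singleton γ⟩
      · obtain ⟨β, hβ, hβpos⟩ := exists_simple_inner_pos B hγpos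
        have hβΦ := B.subset hβ
        have hγΦ := hγpos.1
        obtain ⟨n1, hn1⟩ := pairing (R := R) hγΦ hβΦ
        have hββ : (0:ℝ) < ⟪β,β⟫ := inner_self_pos' (R := R) hβΦ
        have hn1pos : 1 ≤ n1 := by
          by_contra hcon
          push_neg at hcon
          have : (n1:ℝ) ≤ 0 := by exact_mod_cast (by omega : n1 ≤ 0)
          nlinarith
        have hne : γ ≠ β := fun hc => hγΔ (hc ▸ hβ)
        set γ' := sref β γ with hγ'def
        have hγ'pos : B.IsPos γ' := isPos_sref_simple B hβ hγpos hne
        have hht : B.ht γ' = B.ht γ - n1 := ht_sref B hβ hγΦ n1 hn1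
        have hN' : (B.ht γ').toNat ≤ N := by
          have g1 := ht_pos_ge_one B hγ'pos
          have g2 := ht_pos_ge_one B hγpos
          omega
        obtain ⟨l', hl'Δ, hl'⟩ := ih γ' hN' hγ'pos
        refine ⟨β :: (l' ++ [β]), ?_, ?_⟩
        · intro β' hβ'
          rcases List.mem_cons.1 hβ' with h | h
          · exact h ▸ hβ
          · rcases List.mem_append.1 h with h | h
            · exact hl'Δ β' h
            · simpa using (List.mem_singleton.1 h) ▸ hβ
        · have hγeq : γ = sref β γ' := by rw [hγ'def, sref_sref]
          rw [wprod_cons, wprod_append, wprod_singleton, hl']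
          rw [show sref γ = sref (sref β γ') from by rw [← hγeq]]
          rw [sref_conj' (sref β) γ', sref_inv]
          group

lemma sref_word {γ : V} (hγ : γ ∈ R.Φ) :
    ∃ l, (∀ β ∈ l, β ∈ B.Δ) ∧ wprod l = sref γ := by
  rcases isPos_or_isNeg B hγ with hp | hn
  · exact sref_simple_word_aux B (B.ht γ).toNat γ le_rfl hp
  · obtain ⟨l, hl, hw⟩ := sref_simple_word_aux B (B.ht (-γ)).toNat (-γ) le_rfl
      (isPos_neg B hn)
    exact ⟨l, hl, by rw [hw, sref_neg]⟩

lemma weyl_word {w : V ≃ₗᵢ[ℝ] V} (hw : w ∈ R.Weyl) :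
    ∃ l, (∀ β ∈ l, β ∈ B.Δ) ∧ wprod l = w := by
  induction hw using Subgroup.closure_induction with
  | mem s hs =>
      obtain ⟨γ, hγ, rfl⟩ := hs
      exact sref_word B (by exact_mod_cast hγ)
  | one => exact ⟨[], by simp, wprod_nil⟩
  | mul a b _ _ iha ihb =>
      obtain ⟨la, hla, hwa⟩ := iha
      obtain ⟨lb, hlb, hwb⟩ := ihb
      refine ⟨la ++ lb, ?_, by rw [wprod_append, hwa, hwb]⟩
      intro β hβ
      rcases List.mem_append.1 hβ with h | h
      exacts [hla β h, hlb β h]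
  | inv a _ iha =>
      obtain ⟨la, hla, hwa⟩ := iha
      exact ⟨la.reverse, fun β hβ => hla β (List.mem_reverse.1 hβ),
        by rw [wprod_reverse, hwa]⟩

-- ===== chunk 11: highest root, dominance, stabilizer =====

lemma highest_isPos {h : V} (hh : B.IsHighest h) : B.IsPos h := by
  refine ⟨hh.1, fun α hα => ?_⟩
  have h1 := hh.2 α (B.subset hα) α hα
  have h2 := coeff_simple_int B hα α hα
  rw [if_pos rfl] at h2
  omega

lemma highest_dom {h : V} (hh : B.IsHighest h) : ∀ β ∈ B.Δ, 0 ≤ ⟪h, β⟫ := by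
  intro β hβ
  by_contra hc
  push_neg at hc
  have hβΦ := B.subset hβ
  obtain ⟨n, hn⟩ := pairing (R := R) hh.1 hβΦ
  have hββ : (0:ℝ) < ⟪β,β⟫ := inner_self_pos' (R := R) hβΦ
  have hn0 : n ≤ -1 := by
    by_contra hcon
    push_neg at hcon
    have : (0:ℝ) ≤ (n:ℝ) := by exact_mod_cast (by omega : (0:ℤ) ≤ n)
    nlinarith
  have hcoeff := coeff_sref_int B hβ hh.1 n hn β hβ
  rw [if_pos rfl] at hcoeff
  have := hh.2 (sref β h) (R.reflect_mem β hβΦ h hh.1) β hβ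
  omega

lemma inner_h_neg_root {h : V} (hdom : ∀ β ∈ B.Δ, 0 ≤ ⟪h, β⟫) {v : V}
    (hv : B.IsNeg v) : ⟪h, v⟫ ≤ 0 := by
  have h1 : ⟪h, v⟫ = ∑ α ∈ B.Δ, (B.coeff v α : ℝ) * ⟪h, α⟫ := by
    conv_lhs => rw [show ⟪h,v⟫ = ⟪h, ∑ α ∈ B.Δ, (B.coeff v α : ℝ) • α⟫ from by
      rw [← B.coeff_spec v hv.1]]
    rw [inner_sum]
    exact Finset.sum_congr rfl (fun α _ => real_inner_smul_right h α _)
  rw [h1]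
  apply Finset.sum_nonpos
  intro α hα
  have hc1 : (B.coeff v α : ℝ) ≤ 0 := by exact_mod_cast hv.2 α hα
  exact mul_nonpos_of_nonpos_of_nonneg hc1 (hdom α hα)

lemma mem_Itil {h β : V} : β ∈ B.Itil h ↔ β ∈ B.Δ ∧ ⟪h, β⟫ = 0 := Finset.mem_filter

lemma stab_word {h : V} (hh : B.IsHighest h) :
    ∀ (N : ℕ) (l : List V), l.length ≤ N → (∀ γ ∈ l, γ ∈ B.Δ) → wprod l h = h →
    ∃ l', (∀ γ ∈ l', γ ∈ B.Itil h) ∧ wprod l' = wprod l := by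
  intro N
  induction N with
  | zero =>
      intro l hlen _ _
      exact ⟨[], by simp, by rw [List.length_eq_zero_iff.1 (Nat.le_zero.1 hlen)]⟩
  | succ N ih =>
      intro l hlen hl hwh
      by_cases hall : ∀ β ∈ B.Δ, B.IsPos (wprod l β)
      · exact ⟨[], by simp, by
          rw [wprod_nil, eq_one_of_all_pos B (le_refl B.Δ) l.length l le_rfl hl hall]⟩
      · push_neg at hall
        obtain ⟨β, hβ, hneg⟩ := hall
        have hβΦ := B.subset hβ
        have hwβΦ : wprod l β ∈ R.Φ := wprod_root_mem (R := R)
          (fun γ hγ => B.subset (hl γ hγ)) hβΦ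
        have hwβneg : B.IsNeg (wprod l β) := isNeg_of_not_isPos B hwβΦ hneg
        have hinner : ⟪h, β⟫ = 0 := by
          have h1 : ⟪h, β⟫ = ⟪wprod l h, wprod l β⟫ :=
            ((wprod l).inner_map_map h β).symm
          rw [hwh] at h1
          have h2 : ⟪h, wprod l β⟫ ≤ 0 := inner_h_neg_root B (highest_dom B hh) hwβneg
          have h3 : 0 ≤ ⟪h, β⟫ := highest_dom B hh β hβ
          linarith [h1 ▸ h2]
        have hsref : sref β h = h := sref_apply_orth β h hinner
        obtain ⟨l₂, hl₂Δ, hl₂len, hl₂⟩ := deletion B (le_refl B.Δ) l hl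
          (isPos_simple B hβ) hneg
        have hwl₂h : wprod l₂ h = h := by
          rw [hl₂, lie_mul_apply, hsref, hwh]
        obtain ⟨l₃, hl₃I, hl₃⟩ := ih l₂ (by omega) hl₂Δ hwl₂h
        refine ⟨l₃ ++ [β], ?_, ?_⟩
        · intro γ hγ
          rcases List.mem_append.1 hγ with hm | hm
          · exact hl₃I γ hm
          · rw [List.mem_singleton.1 hm]
            exact (mem_Itil B).2 ⟨hβ, hinner⟩
        · rw [wprod_append, wprod_singleton, hl₃, hl₂, mul_assoc, sref_mul_self, mul_one]

-- ===== chunk 12: injectivity on XI =====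

lemma inv_apply_eq (w : V ≃ₗᵢ[ℝ] V) (x : V) : (w⁻¹ : V ≃ₗᵢ[ℝ] V) x = w.symm x := rfl

lemma inner_span_Itil {h v : V} (hv : v ∈ Submodule.span ℝ ((B.Itil h : Finset V) : Set V)) :
    ⟪v, h⟫ = 0 := by
  induction hv using Submodule.span_induction with
  | mem γ hγ =>
      have := (mem_Itil B).1 (by exact_mod_cast hγ)
      rw [real_inner_comm]
      exact this.2
  | zero => exact inner_zero_left h
  | add a b _ _ iha ihb => rw [inner_add_left, iha, ihb, add_zero]
  | smul c a _ iha => rw [real_inner_smul_left, iha, mul_zero]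

lemma xi_inj {h : V} (hh : B.IsHighest h) {x y : V ≃ₗᵢ[ℝ] V}
    (hx : x ∈ B.XI (B.Itil h)) (hy : y ∈ B.XI (B.Itil h)) (hxy : x h = y h) : x = y := by
  set u := y⁻¹ * x with hu
  have huh : u h = h := by
    rw [hu, lie_mul_apply, inv_apply_eq, hxy, y.symm_apply_apply]
  have huW : u ∈ R.Weyl := mul_mem (inv_mem hy.1) hx.1
  obtain ⟨l₀, hl₀Δ, hwl₀⟩ := weyl_word B huW
  obtain ⟨l, hlI, hwl⟩ := stab_word B hh l₀.length l₀ le_rfl hl₀Δ (by rw [hwl₀]; exact huh)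
  have hwlu : wprod l = u := by rw [hwl, hwl₀]
  have hIsub : B.Itil h ⊆ B.Δ := Finset.filter_subset _ _
  by_cases hall : ∀ β ∈ B.Itil h, B.IsPos (u β)
  · have h1 : wprod l = 1 := eq_one_of_all_pos B hIsub l.length l le_rfl hlI
      (fun β hβ => by rw [hwlu]; exact hall β hβ)
    rw [hwlu] at h1
    have h2 : y⁻¹ * x = 1 := by rw [← hu]; exact h1
    exact (inv_mul_eq_one.1 h2).symm
  · push_neg at hall
    obtain ⟨β, hβI, hneg⟩ := hall
    have hβΔ := hIsub hβI
    have hβΦ := B.subset hβΔ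
    have huβΦ : u β ∈ R.Φ := by
      rw [← hwlu]
      exact wprod_root_mem (R := R) (fun γ hγ => B.subset (hIsub (hlI γ hγ))) hβΦ
    have huβneg : B.IsNeg (u β) := isNeg_of_not_isPos B huβΦ hneg
    have hβspan : (β : V) ∈ Submodule.span ℝ ((B.Itil h : Finset V) : Set V) :=
      Submodule.subset_span (by exact_mod_cast hβI)
    have huβspan : u β ∈ Submodule.span ℝ ((B.Itil h : Finset V) : Set V) := by
      rw [← hwlu]
      exact wprod_span hlI hβspan
    have hxβpos : B.IsPos (x β) := hx.2 β hβΦ hβspan (isPos_simple B hβΔ)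
    have hxβ : x β = y (u β) := by
      rw [hu, lie_mul_apply, inv_apply_eq, y.apply_symm_apply]
    have hnegmem : -(u β) ∈ R.Φ := neg_mem (R := R) huβΦ
    have hnegspan : -(u β) ∈ Submodule.span ℝ ((B.Itil h : Finset V) : Set V) :=
      Submodule.neg_mem _ huβspan
    have hypos : B.IsPos (y (-(u β))) := hy.2 _ hnegmem hnegspan (isPos_neg B huβneg)
    rw [map_neg] at hypos
    have : B.IsNeg (y (u β)) := by
      have := isNeg_neg B hypos
      rwa [neg_neg] at this
    exact absurd (hxβ ▸ hxβpos) (not_isPos_of_isNeg B this)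

-- ===== chunk 13: uniqueness of the dominant long root =====

lemma eq_highest_of_dom {h : V} (hh : B.IsHighest h) {α : V} (hα : α ∈ R.Φ)
    (hnorm : ⟪α,α⟫ = ⟪h,h⟫) (hdom : ∀ β ∈ B.Δ, 0 ≤ ⟪α,β⟫) : α = h := by
  have hhΦ := hh.1
  have hdiff : h - α = ∑ α' ∈ B.Δ, ((B.coeff h α' : ℝ) - (B.coeff α α' : ℝ)) • α' := by
    have e1 := B.coeff_spec h hhΦ
    have e2 := B.coeff_spec α hα
    calc h - α = (∑ α' ∈ B.Δ, (B.coeff h α' : ℝ) • α')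
        - (∑ α' ∈ B.Δ, (B.coeff α α' : ℝ) • α') := by rw [← e1, ← e2]
      _ = _ := by
          rw [← Finset.sum_sub_distrib]
          exact Finset.sum_congr rfl (fun α' _ => (sub_smul _ _ _).symm)
  have h2 : ⟪h,h⟫ ≤ ⟪α, h⟫ := by
    have h3 : 0 ≤ ⟪α, h - α⟫ := by
      rw [hdiff, inner_sum]
      apply Finset.sum_nonneg
      intro α' hα'
      rw [real_inner_smul_right]
      have hc : (0:ℝ) ≤ (B.coeff h α' : ℝ) - (B.coeff α α' : ℝ) := by
        have := hh.2 α hα α' hα'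
        have : (B.coeff α α' : ℝ) ≤ (B.coeff h α' : ℝ) := by exact_mod_cast this
        linarith
      exact mul_nonneg hc (hdom α' hα')
    rw [inner_sub_right] at h3
    linarith [hnorm ▸ h3]
  have hh0 : (0:ℝ) < ‖h‖ := norm_pos_iff.2 (root_ne_zero (R := R) hhΦ)
  have hα0 : (0:ℝ) ≤ ‖α‖ := norm_nonneg α
  have hsq : ‖α‖^2 = ‖h‖^2 := by
    rw [← real_inner_self_eq_norm_sq, ← real_inner_self_eq_norm_sq, hnorm]
  have hnormeq : ‖α‖ = ‖h‖ := by nlinarith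
  have hcs : ⟪α, h⟫ ≤ ‖α‖ * ‖h‖ := real_inner_le_norm α h
  have heq : ⟪α, h⟫ = ‖α‖ * ‖h‖ := by
    have : ‖α‖ * ‖h‖ = ⟪h,h⟫ := by
      rw [hnormeq, real_inner_self_eq_norm_sq]
      ring
    linarith [h2, hcs, this]
  have := inner_eq_norm_mul_iff_real.1 heq
  rw [hnormeq] at this
  exact smul_right_injective V (ne_of_gt hh0) this

-- ===== chunk 14: construction of x_alpha =====

lemma xi_one {h : V} : (1 : V ≃ₗᵢ[ℝ] V) ∈ B.XI (B.Itil h) :=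
  ⟨one_mem _, fun γ _ _ hp => hp⟩

lemma sref_mem_weyl {β : V} (hβ : β ∈ R.Φ) : sref β ∈ R.Weyl :=
  Subgroup.subset_closure ⟨β, by simpa using hβ, rfl⟩

lemma construct_to_pos {h : V} (hh : B.IsHighest h) (hlongh : ⟪h,h⟫ = R.r) :
    ∀ (N : ℕ) (α : V), (B.ht h - B.ht α).toNat ≤ N → B.IsPos α → ⟪α,α⟫ = R.r →
    ∃ l, (∀ γ ∈ l, γ ∈ B.Δ) ∧ wprod l ∈ B.XI (B.Itil h) ∧ wprod l h = α ∧
      (l.length : ℝ) = B.htv h - B.htv α := by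
  intro N
  induction N using Nat.strong_induction_on with
  | _ N ih =>
    intro α hN hαpos hαlong
    by_cases hαh : α = h
    · subst hαh
      exact ⟨[], by simp, xi_one B, rfl, by rw [sub_self]; simp⟩
    · have hαΦ := hαpos.1
      have hdomfail : ¬(∀ β ∈ B.Δ, 0 ≤ ⟪α,β⟫) := fun hd =>
        hαh (eq_highest_of_dom B hh hαΦ (by rw [hαlong, hlongh]) hd)
      push_neg at hdomfail
      obtain ⟨β, hβ, hβneg⟩ := hdomfail
      have hβΦ := B.subset hβ
      have hββ : (0:ℝ) < ⟪β,β⟫ := inner_self_pos' (R := R) hβΦ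
      have hαα : (0:ℝ) < ⟪α,α⟫ := inner_self_pos' (R := R) hαΦ
      obtain ⟨n1, hn1⟩ := pairing (R := R) hαΦ hβΦ
      obtain ⟨n2, hn2⟩ := pairing (R := R) hβΦ hαΦ
      have hne : α ≠ β := by
        intro hc
        rw [hc] at hβneg
        linarith
      have hne' : β ≠ -α := by
        intro hc
        exact not_pos_and_neg B (isPos_simple B hβ) (hc ▸ isNeg_neg B hαpos)
      have hn2neg : n2 = -1 := by
        have htri := pair_abs_le_one hαΦ hβΦ (hαlong ▸ r_max (R := R) hβΦ)
          (fun hc => hne hc.symm) hne' n2 hn2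
        have hlt : (n2:ℝ) * ⟪α,α⟫ < 0 := by
          rw [← hn2, real_inner_comm α β]
          linarith
        have : (n2:ℝ) < 0 := by
          by_contra hcc
          push_neg at hcc
          nlinarith
        have : n2 < 0 := by exact_mod_cast this
        omega
      set α' := sref β α with hα'def
      have hα'pos : B.IsPos α' := isPos_sref_simple B hβ hαpos hne
      have hα'Φ := hα'pos.1
      have hα'long : ⟪α',α'⟫ = R.r := by
        rw [hα'def, (sref β).inner_map_map α α]
        exact hαlong
      have hn1neg : n1 ≤ -1 := by
        by_contra hcc
        push_neg at hcc
        have : (0:ℝ) ≤ (n1:ℝ) := by exact_mod_cast (by omega : (0:ℤ) ≤ n1)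
        nlinarith
      have hht : B.ht α' = B.ht α - n1 := ht_sref B hβ hαΦ n1 hn1
      have hhtle : B.ht α' ≤ B.ht h := ht_le_highest B hh hα'Φ
      have hmeas : (B.ht h - B.ht α').toNat < N := by
        have := ht_pos_ge_one B hαpos
        omega
      have hhtv : B.htv α' = B.htv α + 1 := by
        rw [hα'def, htv_sref B hβ hαΦ n1 hn1]
        rw [show 2 * ⟪α,β⟫ = (n2:ℝ) * ⟪α,α⟫ from by rw [← hn2, real_inner_comm β α]]
        rw [hn2neg]
        push_cast
        field_simp
        ring
      obtain ⟨l', hl'Δ, hl'XI, hl'h, hl'len⟩ := ih _ hmeas α' le_rfl hα'pos hα'long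
      have hβα' : ⟪β, α'⟫ = -⟪α,β⟫ := by
        have e1 : ⟪β, α'⟫ = ⟪sref β β, sref β α'⟫ := ((sref β).inner_map_map β α').symm
        rw [e1, sref_apply_self β (root_ne_zero (R := R) hβΦ), hα'def, sref_sref,
          inner_neg_left, real_inner_comm β α]
      refine ⟨β :: l', ?_, ⟨?_, ?_⟩, ?_, ?_⟩
      · intro γ hγ
        rcases List.mem_cons.1 hγ with hm | hm
        · exact hm ▸ hβ
        · exact hl'Δ γ hm
      · rw [wprod_cons]
        exact mul_mem (sref_mem_weyl (R := R) hβΦ) hl'XI.1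
      · intro γ hγΦ hγspan hγpos
        rw [wprod_cons, lie_mul_apply]
        have hw'γpos := hl'XI.2 γ hγΦ hγspan hγpos
        have hw'γne : wprod l' γ ≠ β := by
          intro hc
          have e2 : ⟪wprod l' γ, α'⟫ = ⟪γ, h⟫ := by
            rw [← hl'h]
            exact (wprod l').inner_map_map γ h
          rw [hc, hβα', inner_span_Itil B hγspan] at e2
          linarith
        exact isPos_sref_simple B hβ hw'γpos hw'γne
      · rw [wprod_cons, lie_mul_apply, hl'h, hα'def, sref_sref]
      · simp only [List.length_cons]
        push_cast
        rw [hl'len, hhtv]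
        ring

-- ===== chunk 15: construction of x_{-alpha} =====

lemma construct_to_neg {h : V} (hh : B.IsHighest h) (hlongh : ⟪h,h⟫ = R.r) :
    ∀ (N : ℕ) (α : V), (B.ht α).toNat ≤ N → B.IsPos α → ⟪α,α⟫ = R.r →
    ∃ l, (∀ γ ∈ l, γ ∈ B.Δ) ∧ wprod l ∈ B.XI (B.Itil h) ∧ wprod l h = -α ∧
      (l.length : ℝ) = B.htv h + B.htv α - 1 := by
  intro N
  induction N using Nat.strong_induction_on with
  | _ N ih =>
    intro α hN hαpos hαlong
    have hαΦ := hαpos.1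
    have hαα : (0:ℝ) < ⟪α,α⟫ := inner_self_pos' (R := R) hαΦ
    by_cases hαΔ : α ∈ B.Δ
    · obtain ⟨l', hl'Δ, hl'XI, hl'h, hl'len⟩ := construct_to_pos B hh hlongh
        (B.ht h - B.ht α).toNat α le_rfl hαpos hαlong
      refine ⟨α :: l', ?_, ⟨?_, ?_⟩, ?_, ?_⟩
      · intro γ hγ
        rcases List.mem_cons.1 hγ with hm | hm
        · exact hm ▸ hαΔ
        · exact hl'Δ γ hm
      · rw [wprod_cons]
        exact mul_mem (sref_mem_weyl (R := R) hαΦ) hl'XI.1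
      · intro γ hγΦ hγspan hγpos
        rw [wprod_cons, lie_mul_apply]
        have hw'γpos := hl'XI.2 γ hγΦ hγspan hγpos
        have horth : ⟪wprod l' γ, α⟫ = 0 := by
          rw [← hl'h, (wprod l').inner_map_map γ h]
          exact inner_span_Itil B hγspan
        rw [sref_apply_orth α _ horth]
        exact hw'γpos
      · rw [wprod_cons, lie_mul_apply, hl'h, sref_apply_self α (root_ne_zero (R := R) hαΦ)]
      · simp only [List.length_cons]
        push_cast
        rw [hl'len, htv_simple B hαΔ]
        ring
    · obtain ⟨β, hβ, hβpos⟩ := exists_simple_inner_pos B hαpos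
      have hβΦ := B.subset hβ
      have hββ : (0:ℝ) < ⟪β,β⟫ := inner_self_pos' (R := R) hβΦ
      obtain ⟨n1, hn1⟩ := pairing (R := R) hαΦ hβΦ
      obtain ⟨n2, hn2⟩ := pairing (R := R) hβΦ hαΦ
      have hne : α ≠ β := fun hc => hαΔ (hc ▸ hβ)
      have hne' : β ≠ -α := by
        intro hc
        rw [hc, inner_neg_right] at hβpos
        linarith
      have hn2pos : n2 = 1 := by
        have htri := pair_abs_le_one hαΦ hβΦ (hαlong ▸ r_max (R := R) hβΦ)
          (fun hc => hne hc.symm) hne' n2 hn2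
        have hlt : (0:ℝ) < (n2:ℝ) * ⟪α,α⟫ := by
          rw [← hn2, real_inner_comm α β]
          linarith
        have : (0:ℝ) < (n2:ℝ) := by
          by_contra hcc
          push_neg at hcc
          nlinarith
        have : 0 < n2 := by exact_mod_cast this
        omega
      have hn1pos : 1 ≤ n1 := by
        by_contra hcc
        push_neg at hcc
        have : (n1:ℝ) ≤ 0 := by exact_mod_cast (by omega : n1 ≤ 0)
        nlinarith
      set α' := sref β α with hα'def
      have hα'pos : B.IsPos α' := isPos_sref_simple B hβ hαpos hne
      have hα'Φ := hα'pos.1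
      have hα'long : ⟪α',α'⟫ = R.r := by
        rw [hα'def, (sref β).inner_map_map α α]
        exact hαlong
      have hht : B.ht α' = B.ht α - n1 := ht_sref B hβ hαΦ n1 hn1
      have hmeas : (B.ht α').toNat < N := by
        have g1 := ht_pos_ge_one B hα'pos
        have g2 := ht_pos_ge_one B hαpos
        omega
      have hhtv : B.htv α' = B.htv α - 1 := by
        rw [hα'def, htv_sref B hβ hαΦ n1 hn1]
        rw [show 2 * ⟪α,β⟫ = (n2:ℝ) * ⟪α,α⟫ from by rw [← hn2, real_inner_comm β α]]
        rw [hn2pos]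
        push_cast
        field_simp
      obtain ⟨l', hl'Δ, hl'XI, hl'h, hl'len⟩ := ih _ hmeas α' le_rfl hα'pos hα'long
      have hβα' : ⟪β, α'⟫ = -⟪α,β⟫ := by
        have e1 : ⟪β, α'⟫ = ⟪sref β β, sref β α'⟫ := ((sref β).inner_map_map β α').symm
        rw [e1, sref_apply_self β (root_ne_zero (R := R) hβΦ), hα'def, sref_sref,
          inner_neg_left, real_inner_comm β α]
      refine ⟨β :: l', ?_, ⟨?_, ?_⟩, ?_, ?_⟩
      · intro γ hγ
        rcases List.mem_cons.1 hγ with hm | hm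
        · exact hm ▸ hβ
        · exact hl'Δ γ hm
      · rw [wprod_cons]
        exact mul_mem (sref_mem_weyl (R := R) hβΦ) hl'XI.1
      · intro γ hγΦ hγspan hγpos
        rw [wprod_cons, lie_mul_apply]
        have hw'γpos := hl'XI.2 γ hγΦ hγspan hγpos
        have hw'γne : wprod l' γ ≠ β := by
          intro hc
          have e2 : ⟪wprod l' γ, -α'⟫ = ⟪γ, h⟫ := by
            rw [← hl'h]
            exact (wprod l').inner_map_map γ h
          rw [hc, inner_neg_right, hβα', inner_span_Itil B hγspan, neg_neg] at e2
          linarith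
        exact isPos_sref_simple B hβ hw'γpos hw'γne
      · rw [wprod_cons, lie_mul_apply, hl'h, map_neg, hα'def, sref_sref]
      · simp only [List.length_cons]
        push_cast
        rw [hl'len, hhtv]
        ring

-- ===== chunk 16: relating len to list words =====

lemma word_of_fn {n : ℕ} (g : Fin n → V) :
    (List.ofFn fun i => sref (g i)).prod = wprod (List.ofFn g) := by
  unfold wprod
  rw [List.map_ofFn]
  rfl

lemma len_le_word {w : V ≃ₗᵢ[ℝ] V} {l : List V} (hl : ∀ γ ∈ l, γ ∈ B.Δ)
    (hw : wprod l = w) : B.len w ≤ l.length := by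
  apply Nat.sInf_le
  refine ⟨fun i => l.get i, fun i => hl _ (l.get_mem i), ?_⟩
  rw [word_of_fn, List.ofFn_get, hw]

lemma exists_min_word {w : V ≃ₗᵢ[ℝ] V} {l₀ : List V} (hl₀ : ∀ γ ∈ l₀, γ ∈ B.Δ)
    (hw₀ : wprod l₀ = w) :
    ∃ l, (∀ γ ∈ l, γ ∈ B.Δ) ∧ wprod l = w ∧ l.length = B.len w := by
  have hne : {n | ∃ g : Fin n → V, (∀ i, g i ∈ B.Δ) ∧
      w = (List.ofFn fun i => sref (g i)).prod}.Nonempty := by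
    refine ⟨l₀.length, fun i => l₀.get i, fun i => hl₀ _ (l₀.get_mem i), ?_⟩
    rw [word_of_fn, List.ofFn_get, hw₀]
  obtain ⟨g, hg, hgw⟩ := Nat.sInf_mem hne
  refine ⟨List.ofFn g, ?_, ?_, by rw [List.length_ofFn]; rfl⟩
  · intro γ hγ
    obtain ⟨i, rfl⟩ := List.mem_ofFn.1 hγ
    exact hg i
  · rw [← word_of_fn, ← hgw]

-- ===== chunk 17: word for the reflection in a long positive root =====

lemma sref_word_short {h : V} (hh : B.IsHighest h) :
    ∀ (N : ℕ) (α : V), (B.ht α).toNat ≤ N → B.IsPos α → ⟪α,α⟫ = R.r →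
    ∃ l, (∀ γ ∈ l, γ ∈ B.Δ) ∧ wprod l = sref α ∧ (l.length : ℝ) = 2 * B.htv α - 1 := by
  intro N
  induction N using Nat.strong_induction_on with
  | _ N ih =>
    intro α hN hαpos hαlong
    have hαΦ := hαpos.1
    have hαα : (0:ℝ) < ⟪α,α⟫ := inner_self_pos' (R := R) hαΦ
    by_cases hαΔ : α ∈ B.Δ
    · refine ⟨[α], by simp [hαΔ], wprod_singleton α, ?_⟩
      rw [htv_simple B hαΔ]
      norm_num
    · obtain ⟨β, hβ, hβpos⟩ := exists_simple_inner_pos B hαpos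
      have hβΦ := B.subset hβ
      have hββ : (0:ℝ) < ⟪β,β⟫ := inner_self_pos' (R := R) hβΦ
      obtain ⟨n1, hn1⟩ := pairing (R := R) hαΦ hβΦ
      obtain ⟨n2, hn2⟩ := pairing (R := R) hβΦ hαΦ
      have hne : α ≠ β := fun hc => hαΔ (hc ▸ hβ)
      have hne' : β ≠ -α := by
        intro hc
        rw [hc, inner_neg_right] at hβpos
        linarith
      have hn2pos : n2 = 1 := by
        have htri := pair_abs_le_one hαΦ hβΦ (hαlong ▸ r_max (R := R) hβΦ)
          (fun hc => hne hc.symm) hne' n2 hn2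
        have hlt : (0:ℝ) < (n2:ℝ) * ⟪α,α⟫ := by
          rw [← hn2, real_inner_comm α β]
          linarith
        have : (0:ℝ) < (n2:ℝ) := by
          by_contra hcc
          push_neg at hcc
          nlinarith
        have : 0 < n2 := by exact_mod_cast this
        omega
      have hn1pos : 1 ≤ n1 := by
        by_contra hcc
        push_neg at hcc
        have : (n1:ℝ) ≤ 0 := by exact_mod_cast (by omega : n1 ≤ 0)
        nlinarith
      set α' := sref β α with hα'def
      have hα'pos : B.IsPos α' := isPos_sref_simple B hβ hαpos hne
      have hα'long : ⟪α',α'⟫ = R.r := by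
        rw [hα'def, (sref β).inner_map_map α α]
        exact hαlong
      have hht : B.ht α' = B.ht α - n1 := ht_sref B hβ hαΦ n1 hn1
      have hmeas : (B.ht α').toNat < N := by
        have g1 := ht_pos_ge_one B hα'pos
        have g2 := ht_pos_ge_one B hαpos
        omega
      have hhtv : B.htv α' = B.htv α - 1 := by
        rw [hα'def, htv_sref B hβ hαΦ n1 hn1]
        rw [show 2 * ⟪α,β⟫ = (n2:ℝ) * ⟪α,α⟫ from by rw [← hn2, real_inner_comm β α]]
        rw [hn2pos]
        push_cast
        field_simp
      obtain ⟨l', hl'Δ, hl'w, hl'len⟩ := ih _ hmeas α' le_rfl hα'pos hα'long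
      refine ⟨β :: (l' ++ [β]), ?_, ?_, ?_⟩
      · intro γ hγ
        rcases List.mem_cons.1 hγ with hm | hm
        · exact hm ▸ hβ
        · rcases List.mem_append.1 hm with hm2 | hm2
          · exact hl'Δ γ hm2
          · simpa using (List.mem_singleton.1 hm2) ▸ hβ
      · have hαeq : α = sref β α' := by rw [hα'def, sref_sref]
        rw [wprod_cons, wprod_append, wprod_singleton, hl'w]
        rw [show sref α = sref (sref β α') from by rw [← hαeq]]
        rw [sref_conj' (sref β) α', sref_inv]
        group
      · simp only [List.length_cons, List.length_append, List.length_nil]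
        push_cast
        rw [hl'len, hhtv]
        ring

lemma len_eq_of_word_and_bound {w : V ≃ₗᵢ[ℝ] V} {l : List V} (hl : ∀ γ ∈ l, γ ∈ B.Δ)
    (hw : wprod l = w) (c : ℝ) (hlen : (l.length : ℝ) = c)
    (hlb : ∀ l' : List V, (∀ γ ∈ l', γ ∈ B.Δ) → wprod l' = w → c ≤ (l'.length : ℝ)) :
    (B.len w : ℝ) = c := by
  have h1 : B.len w ≤ l.length := len_le_word B hl hw
  obtain ⟨lm, hlm, hlmw, hlml⟩ := exists_min_word B hl hw
  have h2 : c ≤ (lm.length : ℝ) := hlb lm hlm hlmw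
  have h3 : (lm.length : ℝ) = (B.len w : ℝ) := by exact_mod_cast hlml
  have h4 : (B.len w : ℝ) ≤ (l.length : ℝ) := by exact_mod_cast h1
  linarith

end P9


/-- for every positive long root `α`:
`l(x_α) = (l(s_{α̃}) − l(s_α))/2 = ht∨(α̃) − ht∨(α)` and
`l(x_{−α}) = (l(s_{α̃}) + l(s_α))/2 = ht∨(α̃) + ht∨(α) − 1`. -/
theorem len_xa_and_len_x_neg (R : NRootSystem V) (B : Base R) {h : V}
    (hh : B.IsHighest h) {α : V} (hα : R.IsLong α) (hαpos : B.IsPos α)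
    {x xm : V ≃ₗᵢ[ℝ] V} (hx : x ∈ B.XI (B.Itil h)) (hxα : x h = α)
    (hxm : xm ∈ B.XI (B.Itil h)) (hxmα : xm h = -α) :
    2 * (B.len x : ℤ) = (B.len (sref h) : ℤ) - B.len (sref α) ∧
    (B.len x : ℝ) = B.htv h - B.htv α ∧
    2 * (B.len xm : ℤ) = (B.len (sref h) : ℤ) + B.len (sref α) ∧
    (B.len xm : ℝ) = B.htv h + B.htv α - 1 := by
  have hαΦ := hα.1
  have hαr := hα.2
  have hhΦ := hh.1
  have hlongh : ⟪h,h⟫ = R.r := by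
    have hmap := x.inner_map_map h h
    rw [hxα] at hmap
    rw [← hmap]
    exact hαr
  have hhpos := P9.highest_isPos B hh
  have hLh : B.level h h = 0 := by rw [P9.level_eq_pos B hhpos, sub_self]
  have hLα : B.level h α = B.htv h - B.htv α := P9.level_eq_pos B hαpos
  have hαneg : B.IsNeg (-α) := P9.isNeg_neg B hαpos
  have hLnα : B.level h (-α) = B.htv h + B.htv α - 1 := by
    rw [P9.level_eq_neg B hαneg, P9.htv_neg B hαΦ]
    ring
  have hhneg : B.IsNeg (-h) := P9.isNeg_neg B hhpos
  have hLnh : B.level h (-h) = 2 * B.htv h - 1 := by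
    rw [P9.level_eq_neg B hhneg, P9.htv_neg B hhΦ]
    ring
  obtain ⟨la, hlaΔ, hlaXI, hlah, hlalen⟩ :=
    P9.construct_to_pos B hh hlongh (B.ht h - B.ht α).toNat α le_rfl hαpos hαr
  obtain ⟨lb, hlbΔ, hlbXI, hlbh, hlblen⟩ :=
    P9.construct_to_neg B hh hlongh (B.ht α).toNat α le_rfl hαpos hαr
  have hxeq : x = P9.wprod la := P9.xi_inj B hh hx hlaXI (by rw [hxα, hlah])
  have hxmeq : xm = P9.wprod lb := P9.xi_inj B hh hxm hlbXI (by rw [hxmα, hlbh])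
  have hlenx : (B.len x : ℝ) = B.htv h - B.htv α := by
    apply P9.len_eq_of_word_and_bound B hlaΔ hxeq.symm _ hlalen
    intro l' hl' hw'
    have hb := P9.level_wprod_bound B h hl' hhΦ hlongh
    rw [hw', hxα, hLh, hLα, sub_zero] at hb
    calc B.htv h - B.htv α ≤ |B.htv h - B.htv α| := le_abs_self _
      _ ≤ (l'.length : ℝ) := hb
  have hlenxm : (B.len xm : ℝ) = B.htv h + B.htv α - 1 := by
    apply P9.len_eq_of_word_and_bound B hlbΔ hxmeq.symm _ hlblen
    intro l' hl' hw'
    have hb := P9.level_wprod_bound B h hl' hhΦ hlongh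
    rw [hw', hxmα, hLh, hLnα, sub_zero] at hb
    calc B.htv h + B.htv α - 1 ≤ |B.htv h + B.htv α - 1| := le_abs_self _
      _ ≤ (l'.length : ℝ) := hb
  obtain ⟨lh, hlhΔ, hlhw, hlhlen⟩ :=
    P9.sref_word_short B hh (B.ht h).toNat h le_rfl hhpos hlongh
  have hlensh : (B.len (sref h) : ℝ) = 2 * B.htv h - 1 := by
    apply P9.len_eq_of_word_and_bound B hlhΔ hlhw _ hlhlen
    intro l' hl' hw'
    have hb := P9.level_wprod_bound B h hl' hhΦ hlongh
    have hsh : sref h h = -h := sref_apply_self h (P9.root_ne_zero (R := R) hhΦ)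
    rw [hw', hsh, hLh, hLnh, sub_zero] at hb
    calc 2 * B.htv h - 1 ≤ |2 * B.htv h - 1| := le_abs_self _
      _ ≤ (l'.length : ℝ) := hb
  obtain ⟨ls, hlsΔ, hlsw, hlslen⟩ :=
    P9.sref_word_short B hh (B.ht α).toNat α le_rfl hαpos hαr
  have hlensα : (B.len (sref α) : ℝ) = 2 * B.htv α - 1 := by
    apply P9.len_eq_of_word_and_bound B hlsΔ hlsw _ hlslen
    intro l' hl' hw'
    have hb := P9.level_wprod_bound B h hl' hαΦ hαr
    have hsα : sref α α = -α := sref_apply_self α (P9.root_ne_zero (R := R) hαΦ)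
    rw [hw', hsα, hLα, hLnα] at hb
    calc 2 * B.htv α - 1
        ≤ |B.htv h + B.htv α - 1 - (B.htv h - B.htv α)| := by
          rw [show B.htv h + B.htv α - 1 - (B.htv h - B.htv α) = 2 * B.htv α - 1 from by ring]
          exact le_abs_self _
      _ ≤ (l'.length : ℝ) := hb
  refine ⟨?_, hlenx, ?_, hlenxm⟩
  · have hz : ((2 * (B.len x : ℤ) : ℤ) : ℝ) = (((B.len (sref h) : ℤ) - B.len (sref α) : ℤ) : ℝ) := by
      push_cast
      linarith
    exact_mod_cast hz
  · have hz : ((2 * (B.len xm : ℤ) : ℤ) : ℝ) = (((B.len (sref h) : ℤ) + B.len (sref α) : ℤ) : ℝ) := by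
      push_cast
      linarith
    exact_mod_cast hz
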